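/- arXiv:1210.5777 — 5 statements merged into one kernel-verified Lean document; each statement's English description precedes it below -/
import Mathlib

section
/- Let T be a tree with n vertices, maximal degree d_T ≥ 2, and let b_T be its bottleneck number (for the unique routing along tree paths). Then b_T ≥ (n−1)²/d_T². -/
open Finset SimpleGraph
set_option linter.unusedSectionVars false

/-- The bottleneck number of a routing `Γ`. -/
def bottleneck {V : Type*} [Fintype V] [DecidableEq V] (G : SimpleGraph V)
    [DecidableRel G.Adj] (Γ : ∀ x y : V, G.Walk x y) : ℕ :=
  Finset.univ.sup fun e : G.Dart =>
    (Finset.univ.filter fun p : V × V => e ∈ (Γ p.1 p.2).darts).card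

section Aux
variable {V : Type*} [Fintype V] [DecidableEq V] {T : SimpleGraph V}
    [DecidableRel T.Adj] (htree : T.IsTree)
    (Γ : ∀ x y : V, T.Walk x y) (hpath : ∀ x y, (Γ x y).IsPath)

/-- the side of `v` w.r.t. the edge `uv`: vertices whose path to/from `v` avoids `u`. -/
def Bset (u v : V) : Finset V := univ.filter (fun y => u ∉ (Γ v y).support)

variable {Γ}
include htree hpath

lemma uniq {x y : V} (p : T.Walk x y) (hp : p.IsPath) : p = Γ x y := by
  obtain ⟨q, _, hq⟩ := htree.existsUnique_path x y
  rw [hq p hp, hq (Γ x y) (hpath x y)]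

lemma avoid {x y w : V} (p : T.Walk x y) (hw : w ∉ p.support) : w ∉ (Γ x y).support := by
  rw [← uniq htree hpath p.bypass p.bypass_isPath]
  exact fun h => hw (p.support_bypass_subset h)

omit htree hpath in
lemma mem_Bset {u v y : V} : y ∈ Bset Γ u v ↔ u ∉ (Γ v y).support := by
  simp [Bset]

lemma mem_Bset_iff_not (huv : T.Adj u v) {y : V} :
    y ∈ Bset Γ u v ↔ y ∉ Bset Γ v u := by
  rw [mem_Bset, mem_Bset, not_not]
  constructor
  · intro h
    have : (Walk.cons huv (Γ v y)).IsPath := (hpath v y).cons h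
    rw [← uniq htree hpath _ this]
    simp
  · intro h
    have hd := (hpath u y).dropUntil h
    rw [← uniq htree hpath _ hd]
    intro hu
    have hne : u ≠ v := huv.ne
    have h1 : u ∈ ((Γ u y).takeUntil v h).support := Walk.start_mem_support _
    have h2 : u ∈ ((Γ u y).dropUntil v h).support.tail := by
      have h3 := ((Γ u y).dropUntil v h).support_eq_cons
      rw [h3] at hu
      rw [List.mem_cons] at hu
      exact hu.resolve_left hne
    have hnd := (hpath u y).support_nodup
    rw [← Walk.take_spec (Γ u y) h, Walk.support_append] at hnd
    exact (List.disjoint_of_nodup_append hnd) h1 h2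

end Aux

section Aux2
variable {V : Type*} [Fintype V] [DecidableEq V] {T : SimpleGraph V}
    [DecidableRel T.Adj] (htree : T.IsTree)
    {Γ : ∀ x y : V, T.Walk x y} (hpath : ∀ x y, (Γ x y).IsPath)
include htree hpath

lemma cross_mem {u v : V} (huv : T.Adj u v) {x y : V} (hx : x ∈ Bset Γ v u)
    (hy : y ∈ Bset Γ u v) : (⟨(u, v), huv⟩ : T.Dart) ∈ (Γ x y).darts := by
  rw [mem_Bset] at hx hy
  have hdisj : ∀ w, w ∈ (Γ u x).support → w ∈ (Γ v y).support → False := by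
    intro w hw1 hw2
    have hp : ((Γ u x).takeUntil w hw1).IsPath := (hpath u x).takeUntil hw1
    have hv : v ∉ ((Γ u x).takeUntil w hw1).support :=
      fun h => hx ((Γ u x).support_takeUntil_subset hw1 h)
    have hq : ((Γ v y).takeUntil w hw2).IsPath := (hpath v y).takeUntil hw2
    have hu : u ∉ ((Γ v y).takeUntil w hw2).support :=
      fun h => hy ((Γ v y).support_takeUntil_subset hw2 h)
    have hEq : Walk.cons huv.symm ((Γ u x).takeUntil w hw1) = (Γ v y).takeUntil w hw2 := by
      rw [uniq htree hpath _ (hp.cons hv), uniq htree hpath _ hq]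
    apply hu
    rw [← hEq]
    simp [Walk.support_cons]
  set W : T.Walk x y := ((Γ u x).reverse).append (Walk.cons huv (Γ v y)) with hW
  have hWp : W.IsPath := by
    rw [Walk.isPath_def, hW, Walk.support_append, Walk.support_cons, List.tail_cons]
    exact List.Nodup.append (by simpa [Walk.support_reverse] using (hpath u x).support_nodup)
      (hpath v y).support_nodup
      (by intro w h1 h2
          exact hdisj w (by simpa [Walk.support_reverse] using h1) h2)
  rw [← uniq htree hpath W hWp, hW]
  simp [Walk.darts_append, Walk.darts_cons]

end Aux2

section Aux3
variable {V : Type*} [Fintype V] [DecidableEq V] {T : SimpleGraph V}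
    [DecidableRel T.Adj] (htree : T.IsTree)
    {Γ : ∀ x y : V, T.Walk x y} (hpath : ∀ x y, (Γ x y).IsPath)

omit htree hpath in
lemma not_dart_snd_start {v y : V} (r : T.Walk v y) (hr : r.IsPath) (d : T.Dart)
    (hd : d.snd = v) : d ∉ r.darts := by
  cases r with
  | nil => simp
  | cons h q =>
    rw [Walk.darts_cons]
    intro hm
    rcases List.mem_cons.1 hm with rfl | hm
    · exact T.irrefl (hd ▸ h)
    · have : v ∈ q.support := hd ▸ Walk.dart_snd_mem_support_of_mem_darts _ hm
      exact ((Walk.cons_isPath_iff h q).1 hr).2 this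

include htree hpath

lemma forward_snd {u v : V} (huv : T.Adj u v) {x y : V}
    (hd : (⟨(u, v), huv⟩ : T.Dart) ∈ (Γ x y).darts) : y ∈ Bset Γ u v := by
  have hv : v ∈ (Γ x y).support := Walk.dart_snd_mem_support_of_mem_darts _ hd
  have hr : ((Γ x y).dropUntil v hv).IsPath := (hpath x y).dropUntil hv
  have hnr : (⟨(u, v), huv⟩ : T.Dart) ∉ ((Γ x y).dropUntil v hv).darts :=
    not_dart_snd_start _ hr _ rfl
  have hdt : (⟨(u, v), huv⟩ : T.Dart) ∈ ((Γ x y).takeUntil v hv).darts := by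
    have := hd
    rw [← Walk.take_spec (Γ x y) hv, Walk.darts_append, List.mem_append] at this
    tauto
  have h1 : u ∈ ((Γ x y).takeUntil v hv).support :=
    Walk.dart_fst_mem_support_of_mem_darts _ hdt
  have h2 : u ∉ ((Γ x y).dropUntil v hv).support := by
    intro hu
    have h3 := ((Γ x y).dropUntil v hv).support_eq_cons
    have h2' : u ∈ ((Γ x y).dropUntil v hv).support.tail := by
      rw [h3] at hu
      rw [List.mem_cons] at hu
      exact hu.resolve_left huv.ne
    have hnd := (hpath x y).support_nodup
    rw [← Walk.take_spec (Γ x y) hv, Walk.support_append] at hnd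
    exact (List.disjoint_of_nodup_append hnd) h1 h2'
  rw [mem_Bset, ← uniq htree hpath _ hr]
  exact h2

lemma forward_fst {u v : V} (huv : T.Adj u v) {x y : V}
    (hd : (⟨(u, v), huv⟩ : T.Dart) ∈ (Γ x y).darts) : x ∈ Bset Γ v u := by
  have hrev : (Γ x y).reverse = Γ y x :=
    uniq htree hpath _ (hpath x y).reverse
  have : (⟨(v, u), huv.symm⟩ : T.Dart) ∈ (Γ y x).darts := by
    rw [← hrev, Walk.darts_reverse, List.mem_reverse, List.mem_map]
    exact ⟨⟨(u, v), huv⟩, hd, rfl⟩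
  exact forward_snd htree hpath huv.symm this

lemma load_eq {u v : V} (huv : T.Adj u v) :
    (univ.filter fun p : V × V => (⟨(u, v), huv⟩ : T.Dart) ∈ (Γ p.1 p.2).darts)
      = (Bset Γ v u) ×ˢ (Bset Γ u v) := by
  ext ⟨x, y⟩
  simp only [mem_filter, mem_univ, true_and, mem_product]
  exact ⟨fun h => ⟨forward_fst htree hpath huv h, forward_snd htree hpath huv h⟩,
    fun h => cross_mem htree hpath huv h.1 h.2⟩

end Aux3

section Aux4
variable {V : Type*} [Fintype V] [DecidableEq V] {T : SimpleGraph V}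
    [DecidableRel T.Adj] (htree : T.IsTree)
    {Γ : ∀ x y : V, T.Walk x y} (hpath : ∀ x y, (Γ x y).IsPath)
include htree hpath

lemma card_Bset_add {u v : V} (huv : T.Adj u v) :
    (Bset Γ u v).card + (Bset Γ v u).card = Fintype.card V := by
  have h : Bset Γ u v = (Bset Γ v u)ᶜ := by
    ext y
    simp only [Finset.mem_compl]
    exact mem_Bset_iff_not htree hpath huv
  rw [h]
  rw [Finset.card_compl]
  have : (Bset Γ v u).card ≤ Fintype.card V := Finset.card_le_card (Finset.subset_univ _)
  omega

lemma exists_neighbor_branch {v y : V} (hvy : y ≠ v) :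
    ∃ u ∈ T.neighborFinset v, y ∈ Bset Γ v u := by
  have hp := hpath v y
  cases hΓ : Γ v y with
  | nil => exact absurd rfl hvy
  | @cons _ w _ h q =>
    rw [hΓ] at hp
    have hq := (Walk.cons_isPath_iff h q).1 hp
    refine ⟨w, by simp [h], ?_⟩
    rw [mem_Bset, ← uniq htree hpath q hq.1]
    exact hq.2

lemma branch_sup (v : V) :
    Fintype.card V - 1 ≤
      T.degree v * ((T.neighborFinset v).sup fun u => (Bset Γ v u).card) := by
  have hcov : univ.erase v ⊆ (T.neighborFinset v).biUnion fun u => Bset Γ v u := by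
    intro y hy
    obtain ⟨u, hu, hb⟩ := exists_neighbor_branch htree hpath (Finset.ne_of_mem_erase hy)
    exact Finset.mem_biUnion.2 ⟨u, hu, hb⟩
  calc Fintype.card V - 1 = (univ.erase v).card := by
        rw [Finset.card_erase_of_mem (mem_univ v), Finset.card_univ]
    _ ≤ ((T.neighborFinset v).biUnion fun u => Bset Γ v u).card := Finset.card_le_card hcov
    _ ≤ ∑ u ∈ T.neighborFinset v, (Bset Γ v u).card := Finset.card_biUnion_le
    _ ≤ (T.neighborFinset v).card • ((T.neighborFinset v).sup fun u => (Bset Γ v u).card) :=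
        Finset.sum_le_card_nsmul _ _ _ (fun u hu => Finset.le_sup (f := fun u => (Bset Γ v u).card) hu)
    _ = T.degree v * _ := by rw [smul_eq_mul, T.card_neighborFinset_eq_degree]

lemma exists_good_edge (hdeg : 2 ≤ T.maxDegree) :
    ∃ u v : V, ∃ _ : T.Adj u v,
      Fintype.card V - 1 ≤ T.maxDegree * (Bset Γ v u).card ∧
      2 * (Bset Γ v u).card ≤ Fintype.card V := by
  have hne : Nonempty V := htree.isConnected.nonempty
  have hcard : 1 < Fintype.card V := by
    obtain ⟨v0, hv0⟩ := T.exists_maximal_degree_vertex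
    have h2 : 2 ≤ T.degree v0 := hv0 ▸ hdeg
    have : T.neighborFinset v0 ⊆ univ.erase v0 := by
      intro w hw
      rw [Finset.mem_erase]
      exact ⟨(T.mem_neighborFinset v0 w).1 hw |>.ne', mem_univ w⟩
    have := Finset.card_le_card this
    rw [T.card_neighborFinset_eq_degree, Finset.card_erase_of_mem (mem_univ v0),
      Finset.card_univ] at this
    omega
  have hNne : ∀ v : V, (T.neighborFinset v).Nonempty := by
    intro v
    obtain ⟨y, hy⟩ := Fintype.exists_ne_of_one_lt_card hcard v
    obtain ⟨u, hu, _⟩ := exists_neighbor_branch htree hpath hy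
    exact ⟨u, hu⟩
  set f : V → ℕ := fun v => (T.neighborFinset v).sup fun u => (Bset Γ v u).card with hf
  obtain ⟨v, _, hmin⟩ := Finset.exists_min_image univ f univ_nonempty
  obtain ⟨u, hu, hfu⟩ := Finset.exists_mem_eq_sup (T.neighborFinset v) (hNne v)
    (fun u => (Bset Γ v u).card)
  have hvu : T.Adj v u := (T.mem_neighborFinset v u).1 hu
  set k := (Bset Γ v u).card with hk
  set n := Fintype.card V with hn
  have hkn : k ≤ n := Finset.card_le_card (Finset.subset_univ _)
  have hcent : 2 * k ≤ n := by
    by_contra hcon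
    push_neg at hcon
    have hfvk : f v = k := hfu
    have huB : u ∈ Bset Γ v u := by
      rw [mem_Bset]
      have : Γ u u = Walk.nil := by
        rw [← uniq htree hpath Walk.nil Walk.IsPath.nil]
      rw [this]
      simp [hvu.ne]
    have hflt : f u < f v := by
      rw [hfvk]
      have : f u ≤ k - 1 := by
        apply Finset.sup_le
        intro w hw
        have huw : T.Adj u w := (T.mem_neighborFinset u w).1 hw
        by_cases hwv : w = v
        · subst hwv
          have := card_Bset_add htree hpath hvu
          -- (Bset Γ v u).card + (Bset Γ u v).card = n
          omega
        · have hsub : Bset Γ u w ⊆ (Bset Γ v u).erase u := by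
            intro y hy
            rw [Finset.mem_erase]
            constructor
            · intro hyu
              subst hyu
              rw [mem_Bset] at hy
              exact hy (Walk.end_mem_support _)
            · rw [mem_Bset]
              intro hvs
              have hy2 : y ∈ Bset Γ u v := by
                rw [mem_Bset_iff_not htree hpath hvu.symm, mem_Bset]
                simpa using hvs
              rw [mem_Bset] at hy hy2
              have e1 : Walk.cons hvu.symm (Γ v y) = Γ u y :=
                uniq htree hpath _ ((hpath v y).cons hy2)
              have e2 : Walk.cons huw (Γ w y) = Γ u y :=
                uniq htree hpath _ ((hpath w y).cons hy)
              have := congrArg Walk.support (e1.trans e2.symm)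
              rw [Walk.support_cons, Walk.support_cons,
                Walk.support_eq_cons (Γ v y), Walk.support_eq_cons (Γ w y)] at this
              simp only [List.cons.injEq] at this
              exact hwv this.2.1.symm
          have := Finset.card_le_card hsub
          rw [Finset.card_erase_of_mem huB] at this
          exact this
      have hkpos : 0 < k := by omega
      omega
    exact absurd (hmin u (mem_univ u)) (by omega)
  refine ⟨u, v, hvu.symm, ?_, hcent⟩
  have h1 := branch_sup htree hpath v
  have h2 : T.degree v * f v ≤ T.maxDegree * k := by
    rw [show f v = k from hfu]
    exact Nat.mul_le_mul_right _ (T.degree_le_maxDegree v)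
  calc n - 1 ≤ T.degree v * f v := h1
    _ ≤ T.maxDegree * k := h2

end Aux4

/-- Let `T` be a tree with `n` vertices, maximal degree
`d_T ≥ 2`, and let `b_T` be its bottleneck number for the unique routing
along tree paths.  Then `b_T ≥ (n−1)²/d_T².` -/
theorem stmt7 {V : Type*} [Fintype V] [DecidableEq V] (T : SimpleGraph V)
    [DecidableRel T.Adj] (htree : T.IsTree) (hdeg : 2 ≤ T.maxDegree)
    (Γ : ∀ x y : V, T.Walk x y) (hpath : ∀ x y, (Γ x y).IsPath) :
    ((Fintype.card V - 1 : ℚ)) ^ 2 / (T.maxDegree : ℚ) ^ 2 ≤ bottleneck T Γ := by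
  obtain ⟨u, v, huv, h1, h2⟩ := exists_good_edge htree hpath hdeg
  have hne : Nonempty V := htree.isConnected.nonempty
  set n := Fintype.card V with hn
  set d := T.maxDegree with hd
  set k := (Bset Γ v u).card with hk
  set m := (Bset Γ u v).card with hm
  have hnpos : 0 < n := Fintype.card_pos
  have hsum : m + k = n := card_Bset_add htree hpath huv
  have hload : (univ.filter fun p : V × V =>
      (⟨(u, v), huv⟩ : T.Dart) ∈ (Γ p.1 p.2).darts).card = k * m := by
    rw [load_eq htree hpath huv, Finset.card_product]
  have hb : k * m ≤ bottleneck T Γ := by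
    rw [← hload]
    exact Finset.le_sup
      (f := fun e : T.Dart => (univ.filter fun p : V × V => e ∈ (Γ p.1 p.2).darts).card)
      (mem_univ _)
  have hnat : (n - 1) ^ 2 ≤ d ^ 2 * (k * m) := by
    have hkm : k ≤ m := by omega
    calc (n - 1) ^ 2 ≤ (d * k) ^ 2 := Nat.pow_le_pow_left h1 2
      _ = d ^ 2 * (k * k) := by ring
      _ ≤ d ^ 2 * (k * m) := Nat.mul_le_mul_left _ (Nat.mul_le_mul_left _ hkm)
  have hd2 : (0 : ℚ) < (d : ℚ) ^ 2 := by
    have : (0 : ℚ) < d := by exact_mod_cast (by omega : 0 < d)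
    positivity
  have hn1 : ((n : ℚ) - 1) = ((n - 1 : ℕ) : ℚ) := by
    have h1n : 1 ≤ n := hnpos
    push_cast [h1n]
    ring
  rw [div_le_iff₀ hd2]
  calc ((n : ℚ) - 1) ^ 2 = ((n - 1 : ℕ) : ℚ) ^ 2 := by rw [hn1]
    _ ≤ ((d ^ 2 * (k * m) : ℕ) : ℚ) := by exact_mod_cast hnat
    _ = ((k * m : ℕ) : ℚ) * (d : ℚ) ^ 2 := by push_cast; ring
    _ ≤ (bottleneck T Γ : ℚ) * (d : ℚ) ^ 2 := by
        have : ((k * m : ℕ) : ℚ) ≤ (bottleneck T Γ : ℚ) := by exact_mod_cast hb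
        exact mul_le_mul_of_nonneg_right this (le_of_lt hd2)
end

section
/- If G is a tree on n > 2 vertices (so |E| = n−1 and maximal degree d ≥ 2), then for the unique routing along the tree, d²b > γ*|E|. -/
open Finset SimpleGraph

/-- The maximal path length `γ*` of a routing `Γ`. -/
def maxLen {V : Type*} [Fintype V] (G : SimpleGraph V)
    (Γ : ∀ x y : V, G.Walk x y) : ℕ :=
  Finset.univ.sup fun p : V × V => (Γ p.1 p.2).length

private lemma walk_support_getElem? {V : Type*} {G : SimpleGraph V} :
    ∀ {x y : V} (p : G.Walk x y) (i : ℕ), i ≤ p.length → p.support[i]? = some (p.getVert i)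
  | _, _, .nil, 0, _ => by simp [Walk.support_nil, Walk.getVert_zero]
  | _, _, .cons _ _, 0, _ => by simp [Walk.support_cons, Walk.getVert_zero]
  | _, _, .cons h q, (i+1), hi => by
      simpa using walk_support_getElem? q i (by simpa using hi)

private lemma exists_cross_dart {V : Type*} {G : SimpleGraph V} (A : Set V) :
    ∀ {x y : V} (w : G.Walk x y), x ∈ A → y ∉ A →
      ∃ d ∈ w.darts, d.toProd.1 ∈ A ∧ d.toProd.2 ∉ A := by
  intro x y w
  induction w with
  | nil => intro hx hy; exact absurd hx hy
  | @cons a b c h q ih =>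
    intro hx hy
    by_cases hm : b ∈ A
    · obtain ⟨d, hd, h1, h2⟩ := ih hm hy
      exact ⟨d, by simp [Walk.darts_cons, hd], h1, h2⟩
    · exact ⟨⟨(a, b), h⟩, by simp [Walk.darts_cons], hx, hm⟩

private lemma arith_aux (L m α β E : ℤ) (h1 : 1 ≤ L) (h2 : L ≤ E) (h3 : L ≤ 2 * m)
    (h4 : 2 * m ≤ L + 1) (h5 : m ≤ α) (h6 : m ≤ β) (h7 : α + β = E + 1) :
    L * E < 4 * (α * β) := by
  nlinarith [mul_nonneg (by linarith : (0:ℤ) ≤ α - m) (by linarith : (0:ℤ) ≤ β - m),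
    mul_nonneg (by linarith : (0:ℤ) ≤ 2 * m - L) (by linarith : (0:ℤ) ≤ E + 1 - m),
    mul_nonneg (by linarith : (0:ℤ) ≤ L) (by linarith : (0:ℤ) ≤ L + 1 - 2 * m),
    mul_nonneg (by linarith : (0:ℤ) ≤ L) (by linarith : (0:ℤ) ≤ E - L)]

set_option maxHeartbeats 1000000 in
/-- If `G` is a tree on `n > 2` vertices (so `|E| = n−1` and
maximal degree `d ≥ 2`), then for the unique routing along the tree,
`d²b > γ*|E|`. -/
theorem stmt9 {V : Type*} [Fintype V] [DecidableEq V] (G : SimpleGraph V)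
    [DecidableRel G.Adj] (htree : G.IsTree) (hn : 2 < Fintype.card V)
    (Γ : ∀ x y : V, G.Walk x y) (hpath : ∀ x y, (Γ x y).IsPath) :
    maxLen G Γ * G.edgeFinset.card < G.maxDegree ^ 2 * bottleneck G Γ := by
  classical
  have hne : Nonempty V := Fintype.card_pos_iff.mp (by omega)
  set n := Fintype.card V with hn'
  set L := maxLen G Γ with hLdef
  -- longest path
  obtain ⟨pr, -, hpr⟩ := Finset.exists_mem_eq_sup (univ : Finset (V × V)) univ_nonempty
    (fun p : V × V => (Γ p.1 p.2).length)
  set p : G.Walk pr.1 pr.2 := Γ pr.1 pr.2 with hpdef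
  have hp : p.IsPath := hpath _ _
  have hpL : p.length = L := by rw [hLdef, maxLen, hpr]
  have hLn : L < n := hpL ▸ hp.length_lt
  have hL1 : 1 ≤ L := by
    obtain ⟨x, y, hxy⟩ := Fintype.exists_pair_of_one_lt_card (show 1 < Fintype.card V by omega)
    have h1 : (Γ x y).length ≤ L := Finset.le_sup (f := fun p : V × V => (Γ p.1 p.2).length)
      (Finset.mem_univ (x, y))
    rcases Nat.eq_zero_or_pos (Γ x y).length with h0 | h0
    · exact absurd (Walk.eq_of_length_eq_zero h0) hxy
    · omega
  set m : ℕ := (L + 1) / 2 with hmdef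
  have hm1 : 1 ≤ m := by omega
  have hmL : m ≤ L := by omega
  have h2mL : L ≤ 2 * m := by omega
  have h2m : 2 * m ≤ L + 1 := by omega
  set i : ℕ := m - 1 with hidef
  have hi : i < p.length := by omega
  set u : V := p.getVert i with hudef
  set v : V := p.getVert (i + 1) with hvdef
  have huv : G.Adj u v := p.adj_getVert_succ hi
  set H : SimpleGraph V := G \ fromEdgeSet {s(u, v)} with hHdef
  have hbr : ¬ H.Reachable u v :=
    (isAcyclic_iff_forall_adj_isBridge.mp htree.IsAcyclic huv)
  have hHadj : ∀ {a b : V}, G.Adj a b → s(a, b) ≠ s(u, v) → H.Adj a b := by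
    intro a b hab hne'
    rw [hHdef, sdiff_adj, fromEdgeSet_adj]
    exact ⟨hab, by simp [hne']⟩
  -- partition
  have hpart : ∀ w : V, H.Reachable u w ∨ H.Reachable v w := by
    intro w
    obtain ⟨q⟩ := htree.isConnected.preconnected u w
    have key : ∀ {a b : V} (q : G.Walk a b),
        (H.Reachable u a ∨ H.Reachable v a) → (H.Reachable u b ∨ H.Reachable v b) := by
      intro a b q
      induction q with
      | nil => exact id
      | @cons a' b' c' h q' ih =>
        intro hyp
        apply ih
        by_cases he : s(a', b') = s(u, v)
        · rcases Sym2.eq_iff.mp he with ⟨h1, h2⟩ | ⟨h1, h2⟩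
          · exact Or.inr (h2 ▸ Reachable.refl _)
          · exact Or.inl (h2 ▸ Reachable.refl _)
        · exact Or.imp (fun hr => hr.trans (hHadj h he).reachable)
            (fun hr => hr.trans (hHadj h he).reachable) hyp
    exact key q (Or.inl (Reachable.refl u))
  have hdisj : ∀ w : V, H.Reachable u w → H.Reachable v w → False := by
    intro w h1 h2
    exact hbr (h1.trans h2.symm)
  -- injectivity of getVert on the path
  have hinj : ∀ j k, j ≤ p.length → k ≤ p.length → p.getVert j = p.getVert k → j = k := by
    intro j k hj hk hjk
    have h1 := walk_support_getElem? p j hj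
    have h2 := walk_support_getElem? p k hk
    have hlen : p.support.length = p.length + 1 := p.length_support
    exact (List.getElem?_inj (show j < p.support.length by omega) hp.support_nodup).mp (by rw [h1, h2, hjk])
  -- steps avoiding the middle edge stay in H
  have hstep : ∀ j, j < p.length → j ≠ i → H.Adj (p.getVert j) (p.getVert (j + 1)) := by
    intro j hj hji
    refine hHadj (p.adj_getVert_succ hj) ?_
    intro he
    rcases Sym2.eq_iff.mp he with ⟨h1, h2⟩ | ⟨h1, h2⟩
    · exact hji (hinj j i (by omega) (by omega) h1)
    · have := hinj j (i + 1) (by omega) (by omega) h1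
      have := hinj (j + 1) i (by omega) (by omega) h2
      omega
  -- prefix is reachable from u
  have hpre : ∀ j, j ≤ i → H.Reachable u (p.getVert j) := by
    have key : ∀ k j, j + k = i → H.Reachable u (p.getVert j) := by
      intro k
      induction k with
      | zero => intro j hj; rw [hudef]; exact (by rw [show j = i by omega])
      | succ k ih =>
        intro j hj
        have h1 : H.Adj (p.getVert j) (p.getVert (j + 1)) := hstep j (by omega) (by omega)
        exact (ih (j + 1) (by omega)).trans h1.reachable.symm
    intro j hj
    exact key (i - j) j (by omega)
  -- suffix is reachable from v
  have hsuf : ∀ j, i + 1 ≤ j → j ≤ p.length → H.Reachable v (p.getVert j) := by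
    have key : ∀ k j, j ≤ p.length → i + 1 + k = j → H.Reachable v (p.getVert j) := by
      intro k
      induction k with
      | zero => intro j hj hj'; rw [hvdef]; exact (by rw [show j = i + 1 by omega])
      | succ k ih =>
        intro j hj hj'
        have h1 : H.Adj (p.getVert (j - 1)) (p.getVert j) := by
          have := hstep (j - 1) (by omega) (by omega)
          rwa [show j - 1 + 1 = j by omega] at this
        exact (ih (j - 1) (by omega) (by omega)).trans h1.reachable
    intro j hj hj'
    exact key (j - (i + 1)) j hj' (by omega)
  -- the two sides of the middle edge
  set A : Finset V := univ.filter (fun w => H.Reachable u w) with hAdef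
  set B : Finset V := univ.filter (fun w => H.Reachable v w) with hBdef
  have hAB : Disjoint A B := by
    rw [Finset.disjoint_left]
    intro w hw hw'
    rw [hAdef, Finset.mem_filter] at hw
    rw [hBdef, Finset.mem_filter] at hw'
    exact hdisj w hw.2 hw'.2
  have hABu : A ∪ B = univ := by
    ext w
    simp only [hAdef, hBdef, Finset.mem_union, Finset.mem_filter, Finset.mem_univ, true_and,
      iff_true]
    exact hpart w
  have hcard : A.card + B.card = n := by
    rw [← Finset.card_union_of_disjoint hAB, hABu, Finset.card_univ]
  have hAm : m ≤ A.card := by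
    have hsub : (Finset.range m).image p.getVert ⊆ A := by
      intro w hw
      simp only [Finset.mem_image, Finset.mem_range] at hw
      obtain ⟨j, hj, rfl⟩ := hw
      rw [hAdef, Finset.mem_filter]
      exact ⟨Finset.mem_univ _, hpre j (by omega)⟩
    have hcardim : ((Finset.range m).image p.getVert).card = m := by
      rw [Finset.card_image_of_injOn, Finset.card_range]
      intro a ha b hb hab
      simp only [Finset.coe_range, Set.mem_Iio] at ha hb
      exact hinj a b (by omega) (by omega) hab
    rw [← hcardim]
    exact Finset.card_le_card hsub
  have hBm : m ≤ B.card := by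
    have hsub : (Finset.range (L - i)).image (fun j => p.getVert (i + 1 + j)) ⊆ B := by
      intro w hw
      simp only [Finset.mem_image, Finset.mem_range] at hw
      obtain ⟨j, hj, rfl⟩ := hw
      rw [hBdef, Finset.mem_filter]
      exact ⟨Finset.mem_univ _, hsuf (i + 1 + j) (by omega) (by omega)⟩
    have hcardim : ((Finset.range (L - i)).image (fun j => p.getVert (i + 1 + j))).card
        = L - i := by
      rw [Finset.card_image_of_injOn, Finset.card_range]
      intro a ha b hb hab
      simp only [Finset.coe_range, Set.mem_Iio] at ha hb
      have := hinj (i + 1 + a) (i + 1 + b) (by omega) (by omega) hab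
      omega
    have : L - i ≤ B.card := by rw [← hcardim]; exact Finset.card_le_card hsub
    omega
  -- every pair (x, y) ∈ A × B routes through the dart (u, v)
  set e : G.Dart := ⟨(u, v), huv⟩ with hedef
  have hload : ∀ x y : V, x ∈ A → y ∈ B → e ∈ (Γ x y).darts := by
    intro x y hx hy
    rw [hAdef, Finset.mem_filter] at hx
    rw [hBdef, Finset.mem_filter] at hy
    have hynot : ¬ (y ∈ {w : V | H.Reachable u w}) := fun h => hdisj y h hy.2
    obtain ⟨d, hd, h1, h2⟩ :=
      exists_cross_dart {w : V | H.Reachable u w} (Γ x y) hx.2 hynot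
    by_cases he : s(d.toProd.1, d.toProd.2) = s(u, v)
    · rcases Sym2.eq_iff.mp he with ⟨e1, e2⟩ | ⟨e1, e2⟩
      · have hde : d = e := by
          apply SimpleGraph.Dart.ext
          exact Prod.ext e1 e2
        rwa [← hde]
      · exact absurd (show d.toProd.2 ∈ {w : V | H.Reachable u w} by
          simp only [Set.mem_setOf_eq, e2]; exact Reachable.refl u) h2
    · exact absurd (h1.trans (hHadj d.adj he).reachable) h2
  have hbot : A.card * B.card ≤ bottleneck G Γ := by
    have hsub : A ×ˢ B ⊆ univ.filter (fun q : V × V => e ∈ (Γ q.1 q.2).darts) := by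
      intro q hq
      rw [Finset.mem_product] at hq
      simp only [Finset.mem_filter, Finset.mem_univ, true_and]
      exact hload q.1 q.2 hq.1 hq.2
    calc A.card * B.card = (A ×ˢ B).card := (Finset.card_product A B).symm
      _ ≤ _ := Finset.card_le_card hsub
      _ ≤ bottleneck G Γ :=
        Finset.le_sup (f := fun e : G.Dart =>
          (Finset.univ.filter fun q : V × V => e ∈ (Γ q.1 q.2).darts).card)
          (Finset.mem_univ e)
  -- max degree is at least 2
  have hE : G.edgeFinset.card + 1 = n := htree.card_edgeFinset
  have hd2 : 2 ≤ G.maxDegree := by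
    by_contra hcon
    push_neg at hcon
    have hsum := G.sum_degrees_eq_twice_card_edges
    have hle : ∑ w, G.degree w ≤ ∑ _w : V, 1 := Finset.sum_le_sum (fun w _ => by
      have := G.degree_le_maxDegree w; omega)
    simp only [Finset.sum_const, Finset.card_univ, smul_eq_mul, mul_one] at hle
    omega
  -- final arithmetic
  have hkey : L * G.edgeFinset.card < 4 * (A.card * B.card) := by
    have := arith_aux (L : ℤ) (m : ℤ) (A.card : ℤ) (B.card : ℤ) (G.edgeFinset.card : ℤ)
      (by exact_mod_cast hL1) (by exact_mod_cast (by omega : L ≤ G.edgeFinset.card))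
      (by exact_mod_cast h2mL) (by exact_mod_cast h2m)
      (by exact_mod_cast hAm) (by exact_mod_cast hBm)
      (by exact_mod_cast (by omega : A.card + B.card = G.edgeFinset.card + 1))
    exact_mod_cast this
  have h4 : 4 ≤ G.maxDegree ^ 2 := by nlinarith [hd2]
  calc maxLen G Γ * G.edgeFinset.card = L * G.edgeFinset.card := by rw [hLdef]
    _ < 4 * (A.card * B.card) := hkey
    _ ≤ G.maxDegree ^ 2 * bottleneck G Γ := Nat.mul_le_mul h4 hbot
end

section
/- For any simple connected graph G with at least 3 vertices and any spanning tree T of G, the routing Γ(T) along T satisfies d²b > γ*|E|, where d is the maximal degree of G, b the bottleneck number of Γ(T), γ* its longest path length, and |E| the number of edges of G. -/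
open Finset SimpleGraph

section Aux

set_option linter.unusedSectionVars false

variable {V : Type*} [Fintype V] [DecidableEq V] {T : SimpleGraph V}

/-- The set of vertices `x` such that the tree path from `x` to `b` passes through `a`. -/
def Sfin (Γ : ∀ x y : V, T.Walk x y) (a b : V) : Finset V :=
  Finset.univ.filter (fun x => a ∈ (Γ x b).support)

variable (htree : T.IsTree) (Γ : ∀ x y : V, T.Walk x y)
  (hpath : ∀ x y, (Γ x y).IsPath)

include htree hpath

lemma uniqW {a b : V} (p : T.Walk a b) (hp : p.IsPath) : p = Γ a b := by
  obtain ⟨q, _, hind⟩ := htree.existsUnique_path a b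
  exact (hind p hp).trans (hind (Γ a b) (hpath a b)).symm

lemma gnil (a : V) : Γ a a = Walk.nil :=
  (uniqW htree Γ hpath Walk.nil Walk.IsPath.nil).symm

lemma grev (a b : V) : (Γ a b).reverse = Γ b a :=
  uniqW htree Γ hpath _ ((hpath a b).reverse)

/-- If the tree path from `x` to `v` passes through the neighbour `u` of `v`, then
it is the path from `x` to `u` extended by the edge `uv`. -/
lemma lemA {u v : V} (hadj : T.Adj u v) {x : V} (hu : u ∈ (Γ x v).support) :
    v ∉ (Γ x u).support ∧ Γ x v = (Γ x u).concat hadj := by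
  have hp := hpath x v
  have hq : (Γ x v).takeUntil u hu = Γ x u := uniqW htree Γ hpath _ (hp.takeUntil hu)
  have hr : (Γ x v).dropUntil u hu = Walk.cons hadj Walk.nil := by
    have h1 : (Walk.cons hadj Walk.nil).IsPath := by
      rw [Walk.cons_isPath_iff]
      exact ⟨Walk.IsPath.nil, by simp [hadj.ne]⟩
    rw [uniqW htree Γ hpath _ (hp.dropUntil hu), uniqW htree Γ hpath _ h1]
  have hspec := (Γ x v).take_spec hu
  rw [hq, hr] at hspec
  constructor
  · have hnd := hp.support_nodup
    rw [← hspec, Walk.support_append] at hnd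
    simp only [Walk.support_cons, Walk.support_nil, List.tail_cons] at hnd
    rw [List.nodup_append] at hnd
    intro hv
    exact hnd.2.2 v hv v (by simp) rfl
  · rw [Walk.concat_eq_append, hspec]

/-- Conversely, if the tree path from `x` to `u` avoids the neighbour `v` of `u`,
then appending the edge `uv` gives the tree path from `x` to `v`. -/
lemma lemA' {u v : V} (hadj : T.Adj u v) {x : V} (hv : v ∉ (Γ x u).support) :
    Γ x v = (Γ x u).concat hadj := by
  have hp : ((Γ x u).concat hadj).IsPath := by
    rw [← Walk.isPath_reverse_iff, Walk.reverse_concat]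
    rw [Walk.cons_isPath_iff]
    refine ⟨(hpath x u).reverse, ?_⟩
    rw [Walk.support_reverse]
    simpa using hv
  exact (uniqW htree Γ hpath _ hp).symm

omit htree hpath in
lemma mem_Sfin_iff {a b x : V} : x ∈ Sfin Γ a b ↔ a ∈ (Γ x b).support := by
  simp [Sfin]

lemma S_compl {u v : V} (hadj : T.Adj u v) : Sfin Γ v u = (Sfin Γ u v)ᶜ := by
  ext x
  rw [Finset.mem_compl, mem_Sfin_iff, mem_Sfin_iff]
  constructor
  · intro hx
    exact (lemA htree Γ hpath hadj.symm hx).1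
  · intro hx
    by_contra hv
    have := lemA' htree Γ hpath hadj hv
    apply hx
    rw [this, Walk.support_concat]
    exact List.mem_append_left _ ((Γ x u).end_mem_support)

lemma crossing {u v : V} (hadj : T.Adj u v) {x y : V}
    (hx : x ∈ Sfin Γ u v) (hy : y ∉ Sfin Γ u v) :
    Dart.mk (u, v) hadj ∈ (Γ x y).darts := by
  rw [mem_Sfin_iff] at hx hy
  by_cases hu : u ∈ (Γ x y).support
  · have hdrop : (Γ x y).dropUntil u hu = Γ u y :=
      uniqW htree Γ hpath _ ((hpath x y).dropUntil hu)
    have huvy : u ∉ (Γ v y).support := by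
      rw [← grev htree Γ hpath, Walk.support_reverse]
      simpa using hy
    have hcons : Γ u y = Walk.cons hadj (Γ v y) :=
      (uniqW htree Γ hpath _ (((hpath v y)).cons huvy)).symm
    have hin : Dart.mk (u, v) hadj ∈ (Γ u y).darts := by
      rw [hcons, Walk.darts_cons]
      exact List.mem_cons_self
    exact (Γ x y).darts_dropUntil_subset hu (hdrop ▸ hin)
  · exfalso
    have hbp : ((Γ x y).append (Γ y v)).bypass = Γ x v :=
      uniqW htree Γ hpath _ (Walk.bypass_isPath _)
    have hmem : u ∈ ((Γ x y).append (Γ y v)).support :=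
      Walk.support_bypass_subset _ (hbp ▸ hx)
    rw [Walk.support_append, List.mem_append] at hmem
    rcases hmem with h | h
    · exact hu h
    · exact hy (List.mem_of_mem_tail h)

lemma bottleneck_ge {u v : V} [DecidableRel T.Adj] (hadj : T.Adj u v) :
    (Sfin Γ u v).card * ((Sfin Γ u v)ᶜ).card ≤ bottleneck T Γ := by
  refine le_trans ?_ (Finset.le_sup (Finset.mem_univ (Dart.mk (u, v) hadj)))
  rw [← Finset.card_product]
  apply Finset.card_le_card
  intro p hp
  rw [Finset.mem_product] at hp
  rw [Finset.mem_filter]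
  refine ⟨Finset.mem_univ _, ?_⟩
  exact crossing htree Γ hpath hadj hp.1 (Finset.mem_compl.mp hp.2)

omit htree hpath in
lemma split {x y : V} (p : T.Walk x y) : ∀ i, i < p.length →
    ∃ (u w : V) (h : T.Adj u w) (q : T.Walk x u) (r : T.Walk w y),
      p = q.append (Walk.cons h r) ∧ q.length = i := by
  induction p with
  | nil => simp
  | @cons a b c h p ih =>
    intro i hi
    match i with
    | 0 => exact ⟨a, b, h, Walk.nil, p, by simp, rfl⟩
    | (i + 1) =>
      obtain ⟨u, w, hadj, q, r, hpe, hql⟩ := ih i (by simpa [Nat.succ_lt_succ_iff] using hi)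
      exact ⟨u, w, hadj, Walk.cons h q, r, by rw [hpe]; simp, by simp [hql]⟩

lemma spine {x y u w : V} (hadj : T.Adj u w) (q : T.Walk x u) (r : T.Walk w y)
    (hp : Γ x y = q.append (Walk.cons hadj r)) :
    q.length + 1 ≤ (Sfin Γ u w).card := by
  have hnd : (Γ x y).support.Nodup := (hpath x y).support_nodup
  rw [hp, Walk.support_append] at hnd
  simp only [Walk.support_cons, List.tail_cons] at hnd
  rw [List.nodup_append] at hnd
  have hwq : w ∉ q.support := fun hc => hnd.2.2 w hc w r.start_mem_support rfl
  have hqpath : q.IsPath := by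
    have := hpath x y
    rw [hp] at this
    exact this.of_append_left
  have hsub : q.support.toFinset ⊆ Sfin Γ u w := by
    intro z hz
    rw [List.mem_toFinset] at hz
    rw [mem_Sfin_iff]
    have hq1 : q.dropUntil z hz = Γ z u :=
      uniqW htree Γ hpath _ (hqpath.dropUntil hz)
    have hwz : w ∉ (Γ z u).support := fun hc =>
      hwq (q.support_dropUntil_subset hz (hq1 ▸ hc))
    rw [lemA' htree Γ hpath hadj hwz, Walk.support_concat]
    exact List.mem_append_left _ ((Γ z u).end_mem_support)
  calc q.length + 1 = q.support.toFinset.card := by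
        rw [List.toFinset_card_of_nodup hqpath.support_nodup, Walk.length_support]
    _ ≤ (Sfin Γ u w).card := Finset.card_le_card hsub

lemma penult_unique {x u w w' : V} (h1 : T.Adj w u) (h2 : T.Adj w' u)
    (hw : w ∈ (Γ x u).support) (hw' : w' ∈ (Γ x u).support) : w = w' := by
  obtain ⟨_, he⟩ := lemA htree Γ hpath h1 hw
  obtain ⟨_, he'⟩ := lemA htree Γ hpath h2 hw'
  have hlen : (Γ x w).length = (Γ x w').length := by
    have l1 := congrArg Walk.length he
    have l2 := congrArg Walk.length he'
    rw [Walk.length_concat] at l1 l2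
    omega
  have g1 : (Γ x u).getVert (Γ x w).length = w := by
    rw [he, Walk.concat_eq_append, Walk.getVert_append]
    simp
  have g2 : (Γ x u).getVert (Γ x w').length = w' := by
    rw [he', Walk.concat_eq_append, Walk.getVert_append]
    simp
  rw [← g1, ← g2, hlen]

lemma card_S_eq [DecidableRel T.Adj] {u v : V} (hadj : T.Adj u v) :
    (Sfin Γ u v).card = 1 + ∑ w ∈ (T.neighborFinset u).erase v, (Sfin Γ w u).card := by
  have hu_not : ∀ w ∈ (T.neighborFinset u).erase v, u ∉ Sfin Γ w u := by
    intro w hw hc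
    rw [mem_Sfin_iff, gnil htree Γ hpath] at hc
    simp only [Walk.support_nil, List.mem_singleton] at hc
    rw [Finset.mem_erase, mem_neighborFinset] at hw
    exact hw.2.ne' hc
  have hset : Sfin Γ u v =
      insert u (((T.neighborFinset u).erase v).biUnion (fun w => Sfin Γ w u)) := by
    ext x
    simp only [Finset.mem_insert, Finset.mem_biUnion, Finset.mem_erase, mem_neighborFinset]
    constructor
    · intro hx
      by_cases hxu : x = u
      · exact Or.inl hxu
      · right
        have hx' := (mem_Sfin_iff Γ).mp hx
        have hvnot := (lemA htree Γ hpath hadj hx').1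
        have hnn : ¬ (Γ x u).Nil := Walk.not_nil_of_ne hxu
        have hnn' : ¬ (Γ x u).reverse.Nil := by
          rw [Walk.nil_iff_length_eq, Walk.length_reverse]
          rw [Walk.nil_iff_length_eq] at hnn
          exact hnn
        obtain ⟨w, huw, q, hq⟩ := Walk.not_nil_iff.mp hnn'
        have hwmem : w ∈ (Γ x u).support := by
          have : w ∈ (Γ x u).reverse.support := by
            rw [hq, Walk.support_cons]
            exact List.mem_cons_of_mem _ q.start_mem_support
          rwa [Walk.support_reverse, List.mem_reverse] at this
        exact ⟨w, ⟨fun hwv => hvnot (hwv ▸ hwmem), huw⟩, (mem_Sfin_iff Γ).mpr hwmem⟩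
    · rintro (rfl | ⟨w, ⟨hwv, huw⟩, hxw⟩)
      · exact (mem_Sfin_iff Γ).mpr ((Γ _ _).start_mem_support)
      · rw [mem_Sfin_iff] at hxw ⊢
        have hvnot : v ∉ (Γ x u).support := by
          intro hv
          exact hwv (penult_unique htree Γ hpath huw.symm hadj.symm hxw hv)
        rw [lemA' htree Γ hpath hadj hvnot, Walk.support_concat]
        exact List.mem_append_left _ ((Γ x u).end_mem_support)
  have hdisj : ∀ w ∈ (T.neighborFinset u).erase v, ∀ w' ∈ (T.neighborFinset u).erase v,
      w ≠ w' → Disjoint (Sfin Γ w u) (Sfin Γ w' u) := by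
    intro w hw w' hw' hne
    rw [Finset.disjoint_left]
    intro x hxw hxw'
    rw [Finset.mem_erase, mem_neighborFinset] at hw hw'
    rw [mem_Sfin_iff] at hxw hxw'
    exact absurd (penult_unique htree Γ hpath hw.2.symm hw'.2.symm hxw hxw') hne
  have hnm : u ∉ ((T.neighborFinset u).erase v).biUnion (fun w => Sfin Γ w u) := by
    intro hmem
    obtain ⟨w, hw, hc⟩ := Finset.mem_biUnion.mp hmem
    exact hu_not w hw hc
  rw [hset, Finset.card_insert_of_notMem hnm, Finset.card_biUnion hdisj]
  omega

end Aux

lemma arith1 (γ : ℕ) (hγ : 1 ≤ γ) :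
    γ * (γ + 2) ≤ 4 * (((γ - 1) / 2 + 1) * (γ - (γ - 1) / 2)) := by
  rcases Nat.even_or_odd γ with ⟨s, hs⟩ | ⟨s, hs⟩
  · subst hs
    have hs1 : 1 ≤ s := by omega
    have h1 : (s + s - 1) / 2 + 1 = s := by omega
    have h2 : s + s - (s + s - 1) / 2 = s + 1 := by omega
    rw [h1, h2]
    nlinarith
  · subst hs
    have h1 : (2 * s + 1 - 1) / 2 + 1 = s + 1 := by omega
    have h2 : 2 * s + 1 - (2 * s + 1 - 1) / 2 = s + 1 := by omega
    rw [h1, h2]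
    nlinarith

lemma arith2 (n m d γ b F : ℕ) (hn : 3 ≤ n) (hdeg : 2 * m ≤ n * d)
    (hdn : d + 1 ≤ n) (hd2 : 2 ≤ d) (hγcase : d ^ 2 * (γ + 2) ≤ 4 * m)
    (hF1 : 1 ≤ F) (hFs : 2 * F + 1 ≤ n) (hFl : n ≤ 2 * ((d - 1) * F) + 2)
    (hbF : F * (n - F) ≤ b) : γ * m < d ^ 2 * b := by
  have h1 : d * γ + 2 * d ≤ 2 * n := by nlinarith
  have key3 : γ * m ≤ n * (n - d) := by
    have h2 : (d * γ) * (2 * m) ≤ (2 * n - 2 * d) * (2 * m) :=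
      Nat.mul_le_mul_right _ (by omega)
    have h3 : (2 * n - 2 * d) * (2 * m) ≤ (2 * n - 2 * d) * (n * d) :=
      Nat.mul_le_mul_left _ hdeg
    have h4 : (2 * n - 2 * d) * (n * d) = 2 * d * (n * (n - d)) := by
      zify [show d ≤ n by omega, show 2 * d ≤ 2 * n by omega]
      ring
    have key2 : 2 * d * (γ * m) ≤ 2 * d * (n * (n - d)) := by
      calc 2 * d * (γ * m) = (d * γ) * (2 * m) := by ring
        _ ≤ (2 * n - 2 * d) * (2 * m) := h2
        _ ≤ (2 * n - 2 * d) * (n * d) := h3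
        _ = 2 * d * (n * (n - d)) := h4
    exact Nat.le_of_mul_le_mul_left key2 (by omega)
  have h5 : (n - 2) * (n + 1) ≤ (2 * ((d - 1) * F)) * (2 * (n - F)) :=
    Nat.mul_le_mul (by omega) (by omega)
  have key4 : 4 * (d - 1) * (n * (n - d)) < d ^ 2 * (4 * (d - 1) * (F * (n - F))) := by
    zify [show d ≤ n by omega, show F ≤ n by omega, show 1 ≤ d by omega,
      show 2 ≤ n by omega] at h5 ⊢
    have c3 : (3 : ℤ) ≤ (n : ℤ) := by exact_mod_cast hn
    have c2 : (2 : ℤ) ≤ (d : ℤ) := by exact_mod_cast hd2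
    have cdn : (d : ℤ) + 1 ≤ (n : ℤ) := by exact_mod_cast hdn
    have hA := mul_le_mul_of_nonneg_left h5 (by positivity : (0 : ℤ) ≤ (d : ℤ) ^ 2)
    have hB : (0 : ℤ) ≤ ((n : ℤ) - 3) * ((d : ℤ) * (3 * (d : ℤ) - 4)) :=
      mul_nonneg (by linarith) (mul_nonneg (by linarith) (by linarith))
    have hC : (0 : ℤ) ≤ ((d : ℤ) - 2) * (7 * (d : ℤ) + 2) :=
      mul_nonneg (by linarith) (by linarith)
    nlinarith [sq_nonneg ((n : ℤ) * ((d : ℤ) - 2)), hA, hB, hC]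
  have key5 : 4 * (d - 1) * (γ * m) < 4 * (d - 1) * (d ^ 2 * b) := by
    calc 4 * (d - 1) * (γ * m) ≤ 4 * (d - 1) * (n * (n - d)) :=
          Nat.mul_le_mul_left _ key3
      _ < d ^ 2 * (4 * (d - 1) * (F * (n - F))) := key4
      _ ≤ d ^ 2 * (4 * (d - 1) * b) :=
          Nat.mul_le_mul_left _ (Nat.mul_le_mul_left _ hbF)
      _ = 4 * (d - 1) * (d ^ 2 * b) := by ring
  exact Nat.lt_of_mul_lt_mul_left key5

lemma arith4 (γ m d b i : ℕ) (hγ1 : 1 ≤ γ) (hcase : 4 * m + 1 ≤ d ^ 2 * (γ + 2))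
    (hi : i = (γ - 1) / 2) (hprod : (i + 1) * (γ - i) ≤ b) : γ * m < d ^ 2 * b := by
  have harith := arith1 γ hγ1
  rw [← hi] at harith
  have h1 : 4 * (γ * m) < γ * (4 * m + 1) := by nlinarith
  have h2 : γ * (4 * m + 1) ≤ γ * (d ^ 2 * (γ + 2)) := Nat.mul_le_mul_left _ hcase
  have h4 : d ^ 2 * (γ * (γ + 2)) ≤ d ^ 2 * (4 * ((i + 1) * (γ - i))) :=
    Nat.mul_le_mul_left _ harith
  have h5 : d ^ 2 * (4 * ((i + 1) * (γ - i))) ≤ d ^ 2 * (4 * b) :=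
    Nat.mul_le_mul_left _ (Nat.mul_le_mul_left _ hprod)
  have hfin : 4 * (γ * m) < 4 * (d ^ 2 * b) := by
    calc 4 * (γ * m) < γ * (4 * m + 1) := h1
      _ ≤ γ * (d ^ 2 * (γ + 2)) := h2
      _ = d ^ 2 * (γ * (γ + 2)) := by ring
      _ ≤ d ^ 2 * (4 * ((i + 1) * (γ - i))) := h4
      _ ≤ d ^ 2 * (4 * b) := h5
      _ = 4 * (d ^ 2 * b) := by ring
  omega

/-- For any simple connected graph `G` with at least 3 vertices
and any spanning tree `T` of `G`, the routing `Γ(T)` along `T` satisfies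
`d²b > γ*|E|`, where `d` is the maximal degree of `G`, `b` the bottleneck
number of `Γ(T)`, `γ*` its longest path length, and `|E|` the number of edges
of `G`. -/
theorem stmt11 {V : Type*} [Fintype V] [DecidableEq V] (G : SimpleGraph V)
    [DecidableRel G.Adj] (hconn : G.Connected) (hn : 3 ≤ Fintype.card V)
    (T : SimpleGraph V) [DecidableRel T.Adj] (hT : T ≤ G) (htree : T.IsTree)
    (Γ : ∀ x y : V, T.Walk x y) (hpath : ∀ x y, (Γ x y).IsPath) :
    maxLen T Γ * G.edgeFinset.card < G.maxDegree ^ 2 * bottleneck T Γ := by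
  classical
  set n := Fintype.card V with hn_def
  set m := G.edgeFinset.card with hm_def
  set d := G.maxDegree with hd_def
  set γ := maxLen T Γ with hγ_def
  set b := bottleneck T Γ with hb_def
  have hdeg : 2 * m ≤ n * d := by
    have h1 := Finset.sum_le_card_nsmul Finset.univ (fun v => G.degree v) G.maxDegree
      (fun v _ => G.degree_le_maxDegree v)
    rw [Finset.card_univ, smul_eq_mul, ← hn_def, ← hd_def] at h1
    rw [hm_def, ← G.sum_degrees_eq_twice_card_edges]
    exact h1
  have hmn : n - 1 ≤ m := by
    rw [hm_def, hn_def, ← htree.card_edgeFinset]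
    exact Finset.card_le_card (SimpleGraph.edgeFinset_mono hT)
  have hdn : d + 1 ≤ n := by
    have hne : Nonempty V := Fintype.card_pos_iff.mp (by omega)
    have h := G.maxDegree_lt_card_verts
    rw [← hn_def, ← hd_def] at h
    omega
  have hd2 : 2 ≤ d := by
    by_contra hc
    push_neg at hc
    have h1 : n * d ≤ n * 1 := Nat.mul_le_mul_left n (by omega)
    omega
  have hneV : Nonempty V := Fintype.card_pos_iff.mp (by omega)
  obtain ⟨pr, _, hpr⟩ := Finset.exists_mem_eq_sup (Finset.univ : Finset (V × V))
    (Finset.univ_nonempty) (fun p : V × V => (Γ p.1 p.2).length)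
  have hγ_eq : γ = (Γ pr.1 pr.2).length := by
    rw [hγ_def]; exact hpr
  have hγ1 : 1 ≤ γ := by
    obtain ⟨x, y, hxy⟩ := Fintype.exists_pair_of_one_lt_card (by omega : 1 < Fintype.card V)
    have h1 : (Γ x y).length ≤ γ := by
      rw [hγ_def]
      exact Finset.le_sup (f := fun p : V × V => (Γ p.1 p.2).length)
        (Finset.mem_univ (x, y))
    rcases Nat.eq_zero_or_pos (Γ x y).length with h0 | h0
    · exact absurd (Walk.eq_of_length_eq_zero h0) hxy
    · omega
  have hγn : γ + 1 ≤ n := by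
    have h := (hpath pr.1 pr.2).length_lt
    rw [← hn_def] at h
    omega
  by_cases hcase : d ^ 2 * (γ + 2) ≤ 4 * m
  · -- Case 2: centroid-type bound
    have hcompl : ∀ u v : V, T.Adj u v →
        (Sfin Γ u v).card + (Sfin Γ v u).card = n := by
      intro u v hadj
      rw [S_compl htree Γ hpath hadj, Finset.card_add_card_compl, hn_def]
    have hdart : Nonempty T.Dart := by
      obtain ⟨x, y, hxy⟩ := Fintype.exists_pair_of_one_lt_card (by omega : 1 < Fintype.card V)
      have hnn : ¬ (Γ x y).Nil := Walk.not_nil_of_ne hxy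
      obtain ⟨w, hxw, q, hq⟩ := Walk.not_nil_iff.mp hnn
      exact ⟨Dart.mk (x, w) hxw⟩
    obtain ⟨e0⟩ := hdart
    set M : Finset T.Dart := Finset.univ.filter
      (fun e : T.Dart => n ≤ 2 * (Sfin Γ e.fst e.snd).card) with hM_def
    have hM_ne : M.Nonempty := by
      have h0 := hcompl e0.fst e0.snd e0.adj
      by_cases h1 : n ≤ 2 * (Sfin Γ e0.fst e0.snd).card
      · exact ⟨e0, Finset.mem_filter.mpr ⟨Finset.mem_univ _, h1⟩⟩
      · refine ⟨Dart.mk (e0.snd, e0.fst) e0.adj.symm, Finset.mem_filter.mpr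
          ⟨Finset.mem_univ _, ?_⟩⟩
        show n ≤ 2 * (Sfin Γ e0.snd e0.fst).card
        omega
    obtain ⟨e, heM, hemin⟩ := Finset.exists_min_image M
      (fun e : T.Dart => (Sfin Γ e.fst e.snd).card) hM_ne
    set u := e.fst with hu_def
    set v := e.snd with hv_def
    have hadj : T.Adj u v := e.adj
    have heavy : n ≤ 2 * (Sfin Γ u v).card := (Finset.mem_filter.mp heM).2
    set N := (T.neighborFinset u).erase v with hN_def
    have hcard_eq := card_S_eq htree Γ hpath hadj
    rw [← hN_def] at hcard_eq
    have hg2 : 2 ≤ (Sfin Γ u v).card := by omega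
    have hN_ne : N.Nonempty := by
      by_contra hne
      rw [Finset.not_nonempty_iff_eq_empty] at hne
      rw [hne, Finset.sum_empty] at hcard_eq
      omega
    obtain ⟨w, hwN, hwmax⟩ := Finset.exists_max_image N (fun w => (Sfin Γ w u).card) hN_ne
    have hadj_wu : T.Adj w u := by
      have := Finset.mem_of_mem_erase hwN
      rw [mem_neighborFinset] at this
      exact this.symm
    set F := (Sfin Γ w u).card with hF_def
    have hNd : N.card + 1 ≤ d := by
      have h1 : N.card + 1 = (T.neighborFinset u).card := by
        rw [hN_def, Finset.card_erase_of_mem (by rwa [mem_neighborFinset])]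
        have : 0 < (T.neighborFinset u).card :=
          Finset.card_pos.mpr ⟨v, by rwa [mem_neighborFinset]⟩
        omega
      have h2 : (T.neighborFinset u).card ≤ (G.neighborFinset u).card := by
        apply Finset.card_le_card
        intro z hz
        rw [mem_neighborFinset] at hz ⊢
        exact hT hz
      have h3 : (G.neighborFinset u).card = G.degree u := rfl
      have h4 := G.degree_le_maxDegree u
      omega
    have hsum_le : ∑ w' ∈ N, (Sfin Γ w' u).card ≤ N.card * F := by
      rw [← smul_eq_mul]
      exact Finset.sum_le_card_nsmul _ _ _ (fun w' hw' => hwmax w' hw')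
    have hsum_ge : F ≤ ∑ w' ∈ N, (Sfin Γ w' u).card :=
      Finset.single_le_sum (f := fun w' => (Sfin Γ w' u).card)
        (fun _ _ => Nat.zero_le _) hwN
    have hF_small : 2 * F + 1 ≤ n := by
      by_contra hc
      push_neg at hc
      have hFM : Dart.mk (w, u) hadj_wu ∈ M := by
        rw [hM_def, Finset.mem_filter]
        refine ⟨Finset.mem_univ _, ?_⟩
        show n ≤ 2 * (Sfin Γ w u).card
        omega
      have h9 : (Sfin Γ u v).card ≤ (Sfin Γ w u).card := hemin _ hFM
      omega
    have hF_large : n ≤ 2 * ((d - 1) * F) + 2 := by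
      have h1 : (Sfin Γ u v).card ≤ 1 + N.card * F := by omega
      have h2 : N.card * F ≤ (d - 1) * F := Nat.mul_le_mul_right _ (by omega)
      omega
    have hF1 : 1 ≤ F := by
      rw [hF_def]
      exact Finset.card_pos.mpr ⟨w, (mem_Sfin_iff Γ).mpr (Γ w u).start_mem_support⟩
    have hbF : F * (n - F) ≤ b := by
      have h1 := bottleneck_ge htree Γ hpath hadj_wu
      have h2 : ((Sfin Γ w u)ᶜ).card = n - F := by
        rw [Finset.card_compl, ← hF_def, ← hn_def]
      rw [h2] at h1
      exact h1
    exact arith2 n m d γ b F hn hdeg hdn hd2 hcase hF1 hF_small hF_large hbF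
  · -- Case 1: long path bound
    push_neg at hcase
    have hcase' : 4 * m + 1 ≤ d ^ 2 * (γ + 2) := hcase
    set p := Γ pr.1 pr.2 with hp_def
    set i := (γ - 1) / 2 with hi_def
    have hiγ : i < p.length := by
      rw [← hγ_eq]
      omega
    obtain ⟨u, w, hadj, q, r, hpe, hql⟩ := split p i hiγ
    have hS1 : i + 1 ≤ (Sfin Γ u w).card := by
      rw [← hql]
      exact spine htree Γ hpath hadj q r hpe
    have hrev : Γ pr.2 pr.1 = r.reverse.append (Walk.cons hadj.symm q.reverse) := by
      rw [← grev htree Γ hpath, ← hp_def, hpe]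
      rw [Walk.reverse_append, Walk.reverse_cons, ← Walk.append_assoc]
      simp
    have hS2 : r.length + 1 ≤ (Sfin Γ w u).card := by
      have := spine htree Γ hpath hadj.symm r.reverse q.reverse hrev
      rwa [Walk.length_reverse] at this
    have hlen_sum : γ = q.length + 1 + r.length := by
      have hc := congrArg Walk.length hpe
      simp only [Walk.length_append, Walk.length_cons] at hc
      omega
    have hS2' : γ - i ≤ ((Sfin Γ u w)ᶜ).card := by
      rw [← S_compl htree Γ hpath hadj]
      omega
    have hprod : (i + 1) * (γ - i) ≤ b :=
      le_trans (Nat.mul_le_mul hS1 hS2') (bottleneck_ge htree Γ hpath hadj)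
    exact arith4 γ m d b i hγ1 hcase' hi_def hprod
end

section
/- For every simple connected graph G there exists a choice of canonical paths Γ such that d²b ≥ γ*|E|; if G has at least 3 vertices the inequality is strict. Consequently the Poincaré bound 1 − 2|E|/(d²γ*b) is at most the Cheeger bound 1 − |E|²/(2d⁴b²) for this Γ (strictly less for |X| ≥ 3). -/
open Finset SimpleGraph

lemma my_exists_spanning_tree {V : Type*} [Fintype V] (G : SimpleGraph V)
    (h : G.Connected) : ∃ T : SimpleGraph V, T ≤ G ∧ T.IsTree := by
  classical
  set s : Set ℕ := {k | ∃ T : SimpleGraph V, T ≤ G ∧ T.Connected ∧ T.edgeSet.ncard = k} with hs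
  have hsne : s.Nonempty := ⟨G.edgeSet.ncard, G, le_refl _, h, rfl⟩
  obtain ⟨T, hTG, hTc, hk⟩ := Nat.sInf_mem hsne
  refine ⟨T, hTG, hTc, ?_⟩
  intro v c hc
  have hne : c.edges ≠ [] := by
    intro hnil
    have h0 : c.length = 0 := by rw [← Walk.length_edges, hnil]; rfl
    have h3 := hc.three_le_length
    omega
  obtain ⟨e, he⟩ := List.exists_mem_of_ne_nil _ hne
  obtain ⟨u, w, he⟩ : ∃ u w, s(u, w) ∈ c.edges := by
    induction e using Sym2.ind with
    | _ u w => exact ⟨u, w, he⟩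
  have hreach := (adj_and_reachable_delete_edges_iff_exists_cycle (G := T)).mpr ⟨v, c, hc, he⟩
  set T' : SimpleGraph V := T \ fromEdgeSet {s(u, w)} with hT'
  have hT'le : T' ≤ T := sdiff_le
  have hT'conn : T'.Connected := by
    have hne : Nonempty V := hTc.nonempty
    rw [connected_iff]
    refine ⟨fun a b => ?_, hne⟩
    obtain ⟨p⟩ := hTc a b
    induction p with
    | nil => exact Reachable.refl _
    | @cons a1 b1 c1 hadj q ih =>
      refine Reachable.trans ?_ ih
      by_cases hcase : s(a1, b1) = s(u, w)
      · rw [Sym2.eq_iff] at hcase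
        rcases hcase with ⟨rfl, rfl⟩ | ⟨rfl, rfl⟩
        · exact hreach.2
        · exact hreach.2.symm
      · exact Adj.reachable ⟨hadj, by simp [fromEdgeSet_adj, hcase]⟩
  have hE : T'.edgeSet = T.edgeSet \ {s(u, w)} := by
    rw [hT', edgeSet_sdiff, edgeSet_fromEdgeSet, edgeSet_sdiff_sdiff_isDiag]
  have hlt : T'.edgeSet.ncard < T.edgeSet.ncard := by
    rw [hE]
    exact Set.ncard_diff_singleton_lt_of_mem hreach.1 (T.edgeSet.toFinite)
  have hmem : T'.edgeSet.ncard ∈ s := ⟨T', hT'le.trans hTG, hT'conn, rfl⟩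
  have := Nat.sInf_le hmem
  omega


section TreeSec
variable {V : Type*} [Fintype V] [DecidableEq V] {T : SimpleGraph V}

/-- vertices x whose tree path to `a` avoids `b` -/
def Sset (P : ∀ x y : V, T.Walk x y) (a b : V) : Finset V :=
  univ.filter fun x => b ∉ (P x a).support

variable {P : ∀ x y : V, T.Walk x y}


lemma mem_Sset_iff (P : ∀ x y : V, T.Walk x y) {a b x : V} : x ∈ Sset P a b ↔ b ∉ (P x a).support := by
  simp [Sset]

lemma mem_Sset_of_path (P : ∀ x y : V, T.Walk x y) (hU : ∀ x y (q : T.Walk x y), q.IsPath → q = P x y) {x a b : V} (R : T.Walk x a) (hR : R.IsPath)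
    (hb : b ∉ R.support) : x ∈ Sset P a b := by
  rw [mem_Sset_iff]
  rwa [hU x a R hR] at hb

lemma Sset_compl (P : ∀ x y : V, T.Walk x y) (hP : ∀ x y, (P x y).IsPath) (hU : ∀ x y (q : T.Walk x y), q.IsPath → q = P x y) {a b : V} (hab : T.Adj a b) (x : V) :
    x ∈ Sset P a b ↔ x ∉ Sset P b a := by
  constructor
  · intro h1 h2
    rw [mem_Sset_iff] at h1 h2
    have hW : ((P x a).concat hab).IsPath := by
      rw [Walk.isPath_def, Walk.support_concat]
      refine List.Nodup.append (hP x a).support_nodup (List.nodup_singleton b) ?_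
      intro z hz hz'
      rw [List.mem_singleton] at hz'
      subst hz'
      exact h1 hz
    have heq := hU x b _ hW
    apply h2
    rw [← heq, Walk.support_concat]
    exact List.mem_append_left _ ((P x a).end_mem_support)
  · intro h2
    rw [mem_Sset_iff]
    intro hb
    apply h2
    have hQ : ((P x a).takeUntil b hb).IsPath := (hP x a).takeUntil hb
    refine mem_Sset_of_path P hU _ hQ ?_
    intro ha
    have hspec := (P x a).take_spec hb
    have hnodup : ((P x a).support).Nodup := (hP x a).support_nodup
    rw [← hspec, Walk.support_append] at hnodup
    have hdisj := List.disjoint_of_nodup_append hnodup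
    refine hdisj ha ?_
    have hmem : a ∈ ((P x a).dropUntil b hb).support := Walk.end_mem_support _
    rw [Walk.mem_support_iff] at hmem
    rcases hmem with h | h
    · exact absurd h hab.ne
    · exact h

lemma Sset_card_add (P : ∀ x y : V, T.Walk x y) (hP : ∀ x y, (P x y).IsPath) (hU : ∀ x y (q : T.Walk x y), q.IsPath → q = P x y) {a b : V} (hab : T.Adj a b) :
    (Sset P a b).card + (Sset P b a).card = Fintype.card V := by
  have : Sset P b a = (Sset P a b)ᶜ := by
    ext x
    rw [Finset.mem_compl]
    constructor
    · intro h2 hmem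
      exact (Sset_compl P hP hU hab x).mp hmem h2
    · intro h1
      by_contra h2
      exact h1 ((Sset_compl P hP hU hab x).mpr h2)
  rw [this]
  exact Finset.card_add_card_compl _

lemma crossing_s12 (P : ∀ x y : V, T.Walk x y) (hP : ∀ x y, (P x y).IsPath) (hU : ∀ x y (q : T.Walk x y), q.IsPath → q = P x y) {a b x y : V} (hab : T.Adj a b) (hx : x ∈ Sset P a b)
    (hy : y ∈ Sset P b a) : (⟨(a, b), hab⟩ : T.Dart) ∈ (P x y).darts := by
  have hrev : (P y b).reverse = P b y := hU b y _ (hP y b).reverse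
  have hbP : b ∉ (P x a).support := (mem_Sset_iff P).mp hx
  have haP : a ∉ (P b y).support := by
    rw [← hrev, Walk.support_reverse, List.mem_reverse]
    exact (mem_Sset_iff P).mp hy
  have hdisj : ∀ z, z ∈ (P x a).support → z ∈ (P b y).support → False := by
    intro z hz1 hz2
    have h1 : z ∈ Sset P a b := by
      refine mem_Sset_of_path P hU ((P x a).dropUntil z hz1) ((hP x a).dropUntil hz1) ?_
      intro hb
      exact hbP ((Walk.support_dropUntil_subset _ hz1) hb)
    have h2 : z ∈ Sset P b a := by
      refine mem_Sset_of_path P hU ((P b y).takeUntil z hz2).reverse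
        ((hP b y).takeUntil hz2).reverse ?_
      rw [Walk.support_reverse, List.mem_reverse]
      intro ha
      exact haP ((Walk.support_takeUntil_subset _ hz2) ha)
    exact (Sset_compl P hP hU hab z).mp h1 h2
  have hW : ((P x a).append (Walk.cons hab (P b y))).IsPath := by
    rw [Walk.isPath_def, Walk.support_append, Walk.support_cons, List.tail_cons]
    refine List.Nodup.append (hP x a).support_nodup (hP b y).support_nodup ?_
    exact fun z hz1 hz2 => hdisj z hz1 hz2
  have heq := hU x y _ hW
  rw [← heq]
  rw [Walk.darts_append, Walk.darts_cons]
  simp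

end TreeSec

section TreeSec2
variable {V : Type*} [Fintype V] [DecidableEq V] {T : SimpleGraph V}

lemma main_dart (P : ∀ x y : V, T.Walk x y)
    (hU : ∀ x y (q : T.Walk x y), q.IsPath → q = P x y)
    {w z : V} (R : T.Walk w z) (hR : R.IsPath) :
    ∀ k, k + 1 ≤ R.length → ∃ d : T.Dart, d ∈ R.darts ∧
      ∃ Q : T.Walk w d.fst, Q.IsPath ∧ d.snd ∉ Q.support ∧
        (∀ x ∈ Q.support, x ∈ R.support) ∧ Q.length = k ∧
        R.length ≤ k + (Sset P d.snd d.fst).card := by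
  induction R with
  | nil => intro k hk; simp at hk
  | @cons w w₁ z hadj R' ih =>
    intro k hk
    have hR' : R'.IsPath := ((Walk.cons_isPath_iff hadj R').mp hR).1
    have hwR' : w ∉ R'.support := ((Walk.cons_isPath_iff hadj R').mp hR).2
    match k with
    | 0 =>
      refine ⟨⟨(w, w₁), hadj⟩, by simp [Walk.darts_cons], Walk.nil, Walk.IsPath.nil, ?_, ?_, rfl, ?_⟩
      · simp [hadj.ne']
      · intro x hx; simp at hx; simp [hx]
      · -- R'.support ⊆ Sset P w₁ w, card = R'.length + 1
        have hsub : R'.support.toFinset ⊆ Sset P w₁ w := by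
          intro x hx
          rw [List.mem_toFinset] at hx
          refine mem_Sset_of_path P hU ((R'.takeUntil x hx).reverse)
            ((hR'.takeUntil hx).reverse) ?_
          rw [Walk.support_reverse, List.mem_reverse]
          intro hw
          exact hwR' ((Walk.support_takeUntil_subset _ hx) hw)
        have hcard : R'.support.toFinset.card = R'.length + 1 := by
          rw [List.toFinset_card_of_nodup hR'.support_nodup, Walk.length_support]
        have := Finset.card_le_card hsub
        rw [hcard] at this
        simpa [Walk.length_cons] using this
    | k' + 1 =>
      have hk' : k' + 1 ≤ R'.length := by
        rw [Walk.length_cons] at hk; omega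
      obtain ⟨d, hd, Q', hQ'path, hQ'snd, hQ'sub, hQ'len, hcard⟩ := ih hR' k' hk'
      have hdfst : d.fst ∈ R'.support := R'.dart_fst_mem_support_of_mem_darts hd
      have hdsnd : d.snd ∈ R'.support := R'.dart_snd_mem_support_of_mem_darts hd
      refine ⟨d, by rw [Walk.darts_cons]; exact List.mem_cons_of_mem _ hd,
        Walk.cons hadj Q', ?_, ?_, ?_, ?_, ?_⟩
      · exact hQ'path.cons (fun hw => hwR' (hQ'sub w hw))
      · rw [Walk.support_cons]
        intro hmem
        rcases List.mem_cons.mp hmem with h | h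
        · exact hwR' (h ▸ hdsnd)
        · exact hQ'snd h
      · intro x hx
        rw [Walk.support_cons] at hx
        rw [Walk.support_cons]
        rcases List.mem_cons.mp hx with h | h
        · exact List.mem_cons.mpr (Or.inl h)
        · exact List.mem_cons.mpr (Or.inr (hQ'sub x h))
      · rw [Walk.length_cons, hQ'len]
      · rw [Walk.length_cons]; omega

end TreeSec2


lemma arith1_s12 (A B L k n : ℕ) (h1 : k+1 ≤ A) (h2 : L ≤ k + B) (h3 : A + B = n)
    (h4 : L+1 ≤ n) (h5 : 2*k+1 ≤ L) (h6 : L ≤ 2*k+2) : n*L < 4*A*B := by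
  nlinarith [Nat.mul_le_mul h1 h2, sq_nonneg (A-B), sq_nonneg (A+B)]

lemma arith2_s12 (E dd b n L : ℕ) (h1 : 2*E ≤ n*dd) (h2 : n*L < 4*b) (h3 : 2 ≤ dd) :
    L*E < dd^2*b := by
  zify at h1 h2 h3 ⊢
  have hL : (0:ℤ) ≤ (L:ℤ) := Int.natCast_nonneg L
  have hb : (0:ℤ) ≤ (b:ℤ) := Int.natCast_nonneg b
  have hdd : (0:ℤ) ≤ (dd:ℤ) := Int.natCast_nonneg dd
  nlinarith [mul_le_mul_of_nonneg_left h1 hL,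
    mul_le_mul_of_nonneg_left (show (n:ℤ)*L + 1 ≤ 4*b by linarith) hdd,
    mul_nonneg (mul_nonneg (show (0:ℤ) ≤ (dd:ℤ) - 2 by linarith) hdd) hb]

lemma two_le_maxDeg {V : Type*} [Fintype V] {G : SimpleGraph V} [DecidableRel G.Adj]
    [DecidableEq V] {u v : V} (R : G.Walk u v) (hR : R.IsPath) (h2 : 2 ≤ R.length) :
    2 ≤ G.maxDegree := by
  match R, hR, h2 with
  | .cons (v := a) h (.cons (v := b) h' p), hR, _ =>
    have hub : u ≠ b := by
      have hmem : b ∈ (Walk.cons h' p).support := by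
        rw [Walk.support_cons]
        exact List.mem_cons_of_mem _ (Walk.start_mem_support p)
      intro hEq
      exact ((Walk.cons_isPath_iff _ _).mp hR).2 (hEq ▸ hmem)
    have hsub : ({u, b} : Finset V) ⊆ G.neighborFinset a := by
      intro z hz
      rcases Finset.mem_insert.mp hz with rfl | hz
      · rw [mem_neighborFinset]; exact h.symm
      · rw [Finset.mem_singleton] at hz
        subst hz
        rw [mem_neighborFinset]; exact h'
    have hcard : ({u, b} : Finset V).card = 2 := Finset.card_pair hub
    calc 2 = ({u, b} : Finset V).card := hcard.symm
    _ ≤ G.degree a := Finset.card_le_card hsub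
    _ ≤ G.maxDegree := G.degree_le_maxDegree a

lemma qpart_le (E m dd b : ℕ) (hint : (m * E : ℕ) ≤ dd^2*b)
    (hpos : E = 0 ∨ (0 < E ∧ 0 < m ∧ 0 < dd ∧ 0 < b)) :
    1 - 2 * (E : ℚ) / ((dd : ℚ)^2 * m * b) ≤ 1 - (E : ℚ)^2 / (2 * (dd : ℚ)^4 * (b : ℚ)^2) := by
  rcases hpos with rfl | ⟨hE, hm, hd, hb⟩
  · simp
  · have hE' : (0:ℚ) < E := by exact_mod_cast hE
    have hm' : (0:ℚ) < m := by exact_mod_cast hm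
    have hd' : (0:ℚ) < dd := by exact_mod_cast hd
    have hb' : (0:ℚ) < b := by exact_mod_cast hb
    have hint' : (m:ℚ) * E ≤ (dd:ℚ)^2 * b := by exact_mod_cast hint
    rw [sub_le_sub_iff_left]
    rw [div_le_div_iff₀ (by positivity) (by positivity)]
    nlinarith [mul_pos hE' hb', mul_pos (mul_pos hE' hd') hd', sq_nonneg ((dd:ℚ)*b),
      mul_pos (mul_pos hE' (mul_pos hd' hd')) hb']

lemma qpart_lt (E m dd b : ℕ) (hint : (m * E : ℕ) < dd^2*b)
    (hE : 0 < E) (hm : 0 < m) (hd : 0 < dd) (hb : 0 < b) :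
    1 - 2 * (E : ℚ) / ((dd : ℚ)^2 * m * b) < 1 - (E : ℚ)^2 / (2 * (dd : ℚ)^4 * (b : ℚ)^2) := by
  have hE' : (0:ℚ) < E := by exact_mod_cast hE
  have hm' : (0:ℚ) < m := by exact_mod_cast hm
  have hd' : (0:ℚ) < dd := by exact_mod_cast hd
  have hb' : (0:ℚ) < b := by exact_mod_cast hb
  have hint' : (m:ℚ) * E < (dd:ℚ)^2 * b := by exact_mod_cast hint
  rw [sub_lt_sub_iff_left]
  rw [div_lt_div_iff₀ (by positivity) (by positivity)]
  have key := mul_lt_mul_of_pos_right hint'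
    (mul_pos (mul_pos hE' (pow_pos hd' 2)) hb')
  nlinarith [key, mul_pos (mul_pos hE' (pow_pos hd' 4)) (pow_pos hb' 2)]


/-- For every simple connected graph `G` there exists a choice
of canonical paths `Γ` such that `d²b ≥ γ*|E|`; if `G` has at least 3
vertices the inequality is strict.  Consequently the Poincaré bound
`1 − 2|E|/(d²γ*b)` is at most the Cheeger bound `1 − |E|²/(2d⁴b²)` for this
`Γ` (strictly less for `|X| ≥ 3`). -/
theorem stmt12 {V : Type*} [Fintype V] [DecidableEq V] (G : SimpleGraph V)
    [DecidableRel G.Adj] (hconn : G.Connected) :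
    ∃ Γ : ∀ x y : V, G.Walk x y,
      (∀ x, (Γ x x).length = 0) ∧ (∀ x y, (Γ x y).IsTrail) ∧
      G.maxDegree ^ 2 * bottleneck G Γ ≥ maxLen G Γ * G.edgeFinset.card ∧
      (3 ≤ Fintype.card V →
        G.maxDegree ^ 2 * bottleneck G Γ > maxLen G Γ * G.edgeFinset.card) ∧
      (1 - 2 * (G.edgeFinset.card : ℚ) /
          ((G.maxDegree : ℚ) ^ 2 * maxLen G Γ * bottleneck G Γ)
        ≤ 1 - (G.edgeFinset.card : ℚ) ^ 2 /
          (2 * (G.maxDegree : ℚ) ^ 4 * (bottleneck G Γ : ℚ) ^ 2)) ∧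
      (3 ≤ Fintype.card V →
        1 - 2 * (G.edgeFinset.card : ℚ) /
            ((G.maxDegree : ℚ) ^ 2 * maxLen G Γ * bottleneck G Γ)
          < 1 - (G.edgeFinset.card : ℚ) ^ 2 /
            (2 * (G.maxDegree : ℚ) ^ 4 * (bottleneck G Γ : ℚ) ^ 2)) := by
  classical
  obtain ⟨T, hTG, hTtree⟩ := my_exists_spanning_tree G hconn
  have hNE : Nonempty V := hconn.nonempty
  choose P hprop using hTtree.existsUnique_path
  have hP : ∀ x y, (P x y).IsPath := fun x y => (hprop x y).1
  have hU : ∀ x y (q : T.Walk x y), q.IsPath → q = P x y :=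
    fun x y q hq => (hprop x y).2 q hq
  set Γ : ∀ x y : V, G.Walk x y := fun x y => (P x y).mapLe hTG with hΓdef
  have hlen : ∀ x y, (Γ x y).length = (P x y).length := by
    intro x y
    simp only [hΓdef]
    apply Walk.length_map
  have c1 : ∀ x, (Γ x x).length = 0 := by
    intro x
    rw [hlen, (Walk.isPath_iff_eq_nil).mp (hP x x)]
    rfl
  have c2 : ∀ x y, (Γ x y).IsTrail :=
    fun x y => ((Walk.mapLe_isPath hTG).mpr (hP x y)).isTrail
  have cpath : ∀ x y, (Γ x y).IsPath := fun x y => (Walk.mapLe_isPath hTG).mpr (hP x y)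
  set L := maxLen G Γ with hLdef
  set b := bottleneck G Γ with hbdef
  set E := G.edgeFinset.card with hEdef
  set dd := G.maxDegree with hddef
  set n := Fintype.card V with hndef
  have hlen_le : ∀ x y, (Γ x y).length ≤ L := by
    intro x y
    rw [hLdef]
    unfold maxLen
    exact Finset.le_sup (f := fun p : V × V => (Γ p.1 p.2).length) (Finset.mem_univ (x, y))
  have hble : ∀ e : G.Dart,
      (Finset.univ.filter (fun p : V × V => e ∈ (Γ p.1 p.2).darts)).card ≤ b := by
    intro e
    rw [hbdef]
    unfold bottleneck
    exact Finset.le_sup (f := fun e : G.Dart =>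
      (Finset.univ.filter (fun p : V × V => e ∈ (Γ p.1 p.2).darts)).card)
      (Finset.mem_univ e)
  -- E = 0 and L = 0 in the trivial case
  have hE0 : n ≤ 1 → E = 0 ∧ L = 0 := by
    intro hcard
    have hss : ∀ x y : V, x = y := fun x y =>
      Fintype.card_le_one_iff.mp hcard x y
    constructor
    · rw [hEdef]
      refine Finset.card_eq_zero.mpr (Finset.eq_empty_iff_forall_notMem.mpr ?_)
      intro e he
      rw [mem_edgeFinset] at he
      induction e using Sym2.ind with
      | _ a c => exact (G.ne_of_adj he) (hss a c)
    · rw [hLdef]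
      unfold maxLen
      refine Nat.le_zero.mp (Finset.sup_le ?_)
      rintro ⟨x, y⟩ _
      have hxy := hss x y
      subst hxy
      exact Nat.le_zero.mpr (c1 x)
  -- positivity in the nontrivial case
  have hposall : 2 ≤ n → 0 < E ∧ 0 < L ∧ 0 < dd ∧ 0 < b := by
    intro hn2
    obtain ⟨x, y, hxy⟩ := Fintype.exists_pair_of_one_lt_card (α := V) (by rw [← hndef]; omega)
    have hlen1 : 1 ≤ (Γ x y).length := by
      by_contra hcon
      push_neg at hcon
      rw [Nat.lt_one_iff] at hcon
      exact hxy (Walk.eq_of_length_eq_zero hcon)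
    have hdne : (Γ x y).darts ≠ [] := by
      intro hnil
      have := congrArg List.length hnil
      rw [Walk.length_darts] at this
      simp only [List.length_nil] at this
      omega
    set e1 : G.Dart := (Γ x y).darts.head hdne with he1def
    have he1 : e1 ∈ (Γ x y).darts := List.head_mem hdne
    refine ⟨?_, le_trans hlen1 (hlen_le x y), ?_, ?_⟩
    · rw [hEdef]
      refine Finset.card_pos.mpr ⟨e1.edge, ?_⟩
      rw [mem_edgeFinset]
      exact e1.edge_mem
    · calc 0 < G.degree e1.fst := by
            rw [G.degree_pos_iff_exists_adj]
            exact ⟨e1.snd, e1.adj⟩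
      _ ≤ dd := G.degree_le_maxDegree _
    · have hmem : (x, y) ∈ Finset.univ.filter
          (fun p : V × V => e1 ∈ (Γ p.1 p.2).darts) := by
        rw [Finset.mem_filter]
        exact ⟨Finset.mem_univ _, he1⟩
      calc 0 < (Finset.univ.filter (fun p : V × V => e1 ∈ (Γ p.1 p.2).darts)).card :=
            Finset.card_pos.mpr ⟨(x, y), hmem⟩
      _ ≤ b := hble e1
  -- degree sum bound
  have h2E : 2 * E ≤ n * dd := by
    rw [hEdef, hndef, hddef, ← sum_degrees_eq_twice_card_edges]
    calc ∑ v, G.degree v ≤ Finset.univ.card • G.maxDegree :=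
          Finset.sum_le_card_nsmul _ _ _ (fun v _ => G.degree_le_maxDegree v)
    _ = Fintype.card V * G.maxDegree := by rw [smul_eq_mul, Finset.card_univ]
  -- the key strict inequality for n ≥ 3
  have hstrict : 3 ≤ n → L * E < dd ^ 2 * b := by
    intro hn3
    obtain ⟨hEpos, hLpos, hdpos, hbpos⟩ := hposall (by omega)
    -- L ≥ 2
    have hL2 : 2 ≤ L := by
      by_contra hcon
      push_neg at hcon
      have hL1 : L ≤ 1 := by omega
      have hadjall : ∀ p q : V, p ≠ q → T.Adj p q := by
        intro p q hpq
        have h1 : 1 ≤ (P p q).length := by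
          by_contra hc
          push_neg at hc
          rw [Nat.lt_one_iff] at hc
          exact hpq (Walk.eq_of_length_eq_zero hc)
        have h2 : (P p q).length ≤ 1 := by
          rw [← hlen]
          exact le_trans (hlen_le p q) hL1
        exact Walk.adj_of_length_eq_one (le_antisymm h2 h1)
      obtain ⟨x, y, hxy⟩ := Fintype.exists_pair_of_one_lt_card (α := V) (by rw [← hndef]; omega)
      have hz : ∃ z : V, z ≠ x ∧ z ≠ y := by
        have hcompl : (({x, y} : Finset V)ᶜ).Nonempty := by
          rw [← Finset.card_pos, Finset.card_compl, Finset.card_pair hxy]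
          omega
        obtain ⟨z, hz⟩ := hcompl
        rw [Finset.mem_compl, Finset.mem_insert, Finset.mem_singleton] at hz
        push_neg at hz
        exact ⟨z, hz⟩
      obtain ⟨z, hzx, hzy⟩ := hz
      have hbridge := (isAcyclic_iff_forall_adj_isBridge.mp hTtree.2) (hadjall x y hxy)
      rw [isBridge_iff_adj_and_forall_walk_mem_edges] at hbridge
      have hwalk := hbridge (Walk.cons (hadjall x z (Ne.symm hzx))
        (Walk.cons (hadjall z y hzy) Walk.nil))
      rw [Walk.edges_cons, Walk.edges_cons, Walk.edges_nil] at hwalk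
      rcases List.mem_cons.mp hwalk with h | h
      · rw [Sym2.eq_iff] at h
        rcases h with ⟨-, h2⟩ | ⟨h1, -⟩
        · exact hzy h2.symm
        · exact hzx h1.symm
      · rcases List.mem_cons.mp h with h | h
        · rw [Sym2.eq_iff] at h
          rcases h with ⟨h1, -⟩ | ⟨h1, -⟩
          · exact hzx h1.symm
          · exact hxy h1
        · simp at h
    -- maximal pair
    obtain ⟨p0, _, hsup⟩ := Finset.exists_mem_eq_sup Finset.univ Finset.univ_nonempty
      (fun p : V × V => (Γ p.1 p.2).length)
    obtain ⟨u, v⟩ := p0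
    have hLuv : L = (P u v).length := by
      rw [hLdef]
      unfold maxLen
      rw [hsup]
      exact hlen u v
    set k := (L - 1) / 2 with hkdef
    have hk : k + 1 ≤ (P u v).length := by rw [← hLuv]; omega
    obtain ⟨d, hd, Q, hQpath, hQsnd, hQsub, hQlen, hcard⟩ :=
      main_dart P hU (P u v) (hP u v) k hk
    set A := (Sset P d.fst d.snd).card with hAdef
    set B := (Sset P d.snd d.fst).card with hBdef
    have hA : k + 1 ≤ A := by
      have hsubQ : Q.support.toFinset ⊆ Sset P d.fst d.snd := by
        intro x hx
        rw [List.mem_toFinset] at hx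
        refine mem_Sset_of_path P hU (Q.dropUntil x hx) (hQpath.dropUntil hx) ?_
        intro hmem
        exact hQsnd ((Walk.support_dropUntil_subset _ hx) hmem)
      have hcardQ : Q.support.toFinset.card = k + 1 := by
        rw [List.toFinset_card_of_nodup hQpath.support_nodup, Walk.length_support, hQlen]
      rw [hAdef, ← hcardQ]
      exact Finset.card_le_card hsubQ
    have hABn : A + B = n := Sset_card_add P hP hU d.adj
    have hBL : L ≤ k + B := by rw [hLuv]; exact hcard
    have hnL : L + 1 ≤ n := by
      have := (hP u v).length_lt
      rw [← hLuv] at this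
      omega
    have h4AB : n * L < 4 * A * B :=
      arith1_s12 A B L k n hA hBL hABn hnL (by omega) (by omega)
    -- bottleneck bound
    have husage : A * B ≤ b := by
      set e0 : G.Dart := ⟨(d.fst, d.snd), hTG d.adj⟩ with he0def
      have hcross : ∀ x ∈ Sset P d.fst d.snd, ∀ y ∈ Sset P d.snd d.fst,
          e0 ∈ (Γ x y).darts := by
        intro x hx y hy
        have hT := crossing_s12 P hP hU d.adj hx hy
        have : Γ x y = (P x y).map (Hom.ofLE hTG) := rfl
        rw [this, Walk.darts_map]
        refine List.mem_map.mpr ⟨⟨(d.fst, d.snd), d.adj⟩, hT, ?_⟩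
        rfl
      have hsub2 : (Sset P d.fst d.snd) ×ˢ (Sset P d.snd d.fst) ⊆
          Finset.univ.filter (fun p : V × V => e0 ∈ (Γ p.1 p.2).darts) := by
        rintro ⟨x, y⟩ hq
        rw [Finset.mem_product] at hq
        rw [Finset.mem_filter]
        exact ⟨Finset.mem_univ _, hcross x hq.1 y hq.2⟩
      calc A * B = ((Sset P d.fst d.snd) ×ˢ (Sset P d.snd d.fst)).card :=
            (Finset.card_product _ _).symm
      _ ≤ (Finset.univ.filter (fun p : V × V => e0 ∈ (Γ p.1 p.2).darts)).card :=
            Finset.card_le_card hsub2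
      _ ≤ b := hble e0
    have hdd2 : 2 ≤ dd := by
      refine two_le_maxDeg (Γ u v) (cpath u v) ?_
      rw [hlen, ← hLuv]
      exact hL2
    have hnL4b : n * L < 4 * b := by
      calc n * L < 4 * A * B := h4AB
      _ = 4 * (A * B) := by ring
      _ ≤ 4 * b := Nat.mul_le_mul_left 4 husage
    exact arith2_s12 E dd b n L h2E hnL4b hdd2
  -- the non-strict inequality
  have hineq : L * E ≤ dd ^ 2 * b := by
    rcases le_or_gt n 1 with hn | hn
    · rw [(hE0 hn).2]
      simp
    rcases le_or_gt 3 n with hn3 | hn3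
    · exact le_of_lt (hstrict hn3)
    · -- n = 2
      obtain ⟨hEpos, hLpos, hdpos, hbpos⟩ := hposall hn
      have hL1 : L ≤ 1 := by
        rw [hLdef]
        unfold maxLen
        refine Finset.sup_le ?_
        rintro ⟨x, y⟩ _
        have hlt := (cpath x y).length_lt
        rw [← hndef] at hlt
        show (Γ x y).length ≤ 1
        omega
      have hn2' : n = 2 := by omega
      rw [hn2'] at h2E
      have hEd : E ≤ dd := by omega
      calc L * E ≤ 1 * E := Nat.mul_le_mul_right E hL1
      _ = E := one_mul E
      _ ≤ dd := hEd
      _ ≤ dd ^ 2 * b := by nlinarith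
  have hposor : E = 0 ∨ (0 < E ∧ 0 < L ∧ 0 < dd ∧ 0 < b) := by
    rcases le_or_gt n 1 with hn | hn
    · exact Or.inl (hE0 hn).1
    · exact Or.inr (hposall hn)
  refine ⟨Γ, c1, c2, hineq, hstrict, qpart_le E L dd b hineq hposor, fun h3 => ?_⟩
  obtain ⟨hEpos, hLpos, hdpos, hbpos⟩ := hposall (by omega)
  exact qpart_lt E L dd b (hstrict h3) hEpos hLpos hdpos hbpos
end

section
/- If G is a connected graph whose mean geodesic distance (1/n²)Σ_{x,y} dist(x,y) is at least one eighth of its diameter, then for any routing Γ consisting entirely of geodesic paths, 4d²b ≥ γ*|E|. -/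
open Finset SimpleGraph

/-- If `G` is a connected graph whose mean geodesic distance
`(1/n²)Σ_{x,y} dist(x,y)` is at least one eighth of its diameter
`D = max_{x,y} dist(x,y)`, then for any routing `Γ` consisting entirely of
geodesic paths, `4d²b ≥ γ*|E|`. -/
theorem stmt19 {V : Type*} [Fintype V] [DecidableEq V] (G : SimpleGraph V)
    [DecidableRel G.Adj] (hconn : G.Connected)
    (hmean : ((Finset.univ.sup fun p : V × V => G.dist p.1 p.2 : ℕ) : ℚ) / 8 ≤
      (∑ p : V × V, (G.dist p.1 p.2 : ℚ)) / (Fintype.card V : ℚ) ^ 2)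
    (Γ : ∀ x y : V, G.Walk x y)
    (hgeo : ∀ x y : V, (Γ x y).length = G.dist x y) :
    maxLen G Γ * G.edgeFinset.card ≤ 4 * G.maxDegree ^ 2 * bottleneck G Γ := by
  classical
  set D : ℕ := Finset.univ.sup fun p : V × V => G.dist p.1 p.2 with hD
  set n : ℕ := Fintype.card V
  set E : ℕ := G.edgeFinset.card
  set b : ℕ := bottleneck G Γ
  set d : ℕ := G.maxDegree
  -- maxLen = D
  have hmaxLen : maxLen G Γ = D := by
    unfold maxLen
    exact Finset.sup_congr rfl fun p _ => hgeo p.1 p.2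
  rcases Nat.eq_zero_or_pos E with hE | hE
  · rw [hmaxLen, hE]; simp
  -- n ≥ 1
  have hV : Nonempty V := hconn.nonempty
  have hn : 0 < n := Fintype.card_pos
  -- darts of geodesic walks are nodup
  have hnodup : ∀ x y : V, ((Γ x y).darts).Nodup := fun x y =>
    SimpleGraph.Walk.darts_nodup_of_support_nodup
      (((Γ x y).isPath_of_length_eq_dist (hgeo x y)).support_nodup)
  -- double counting
  have hcount : ∑ p : V × V, (G.dist p.1 p.2) =
      ∑ e : G.Dart, (Finset.univ.filter fun p : V × V => e ∈ (Γ p.1 p.2).darts).card := by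
    rw [Finset.sum_congr rfl (fun p _ => (hgeo p.1 p.2).symm)]
    simp only [Finset.card_filter]
    rw [Finset.sum_comm]
    refine Finset.sum_congr rfl fun p _ => ?_
    rw [Finset.sum_boole]
    have : (Finset.univ.filter fun e : G.Dart => e ∈ (Γ p.1 p.2).darts) =
        (Γ p.1 p.2).darts.toFinset := by
      ext e; simp
    rw [this]
    rw [List.toFinset_card_of_nodup (hnodup p.1 p.2)]
    simp [SimpleGraph.Walk.length_darts]
  -- bound by bottleneck
  have hsum_le : ∑ p : V × V, (G.dist p.1 p.2) ≤ 2 * E * b := by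
    rw [hcount]
    calc ∑ e : G.Dart, (Finset.univ.filter fun p : V × V => e ∈ (Γ p.1 p.2).darts).card
        ≤ ∑ _e : G.Dart, b := Finset.sum_le_sum fun e _ =>
          Finset.le_sup (f := fun e : G.Dart => (Finset.univ.filter fun p : V × V => e ∈ (Γ p.1 p.2).darts).card) (Finset.mem_univ e)
      _ = Fintype.card G.Dart * b := by rw [Finset.sum_const, Finset.card_univ, smul_eq_mul]
      _ = 2 * E * b := by rw [G.dart_card_eq_twice_card_edges]
  -- from hmean : D * n^2 ≤ 8 * Σ dist
  have hDn : D * n ^ 2 ≤ 8 * ∑ p : V × V, G.dist p.1 p.2 := by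
    have h8 : (0:ℚ) < 8 := by norm_num
    have hn2 : (0:ℚ) < (n : ℚ) ^ 2 := by positivity
    rw [div_le_div_iff₀ h8 hn2] at hmean
    have : ((D * n ^ 2 : ℕ) : ℚ) ≤ ((8 * ∑ p : V × V, G.dist p.1 p.2 : ℕ) : ℚ) := by
      push_cast
      linarith [hmean]
    exact_mod_cast this
  -- 2E ≤ n*d
  have hEd : 2 * E ≤ n * d := by
    calc 2 * E = ∑ v : V, G.degree v := (G.sum_degrees_eq_twice_card_edges).symm
      _ ≤ ∑ _v : V, d := Finset.sum_le_sum fun v _ => G.degree_le_maxDegree v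
      _ = n * d := by rw [Finset.sum_const, Finset.card_univ, smul_eq_mul]
  -- combine
  have hkey : D * n ^ 2 ≤ 16 * E * b := by
    calc D * n ^ 2 ≤ 8 * ∑ p : V × V, G.dist p.1 p.2 := hDn
      _ ≤ 8 * (2 * E * b) := by omega
      _ = 16 * E * b := by ring
  rw [hmaxLen]
  have h4 : 0 < 4 * E := by omega
  refine Nat.le_of_mul_le_mul_right ?_ h4
  nlinarith [hkey, hEd, Nat.mul_le_mul hEd hEd, Nat.mul_le_mul_left D (Nat.mul_le_mul hEd hEd)]
end
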